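/- For any loop L, γ2 L = L_2: the second term of the lower central series coincides with the second commutator-associator subloop, and both equal the smallest normal subloop N such that L/N is an abelian group. -/
import Mathlib


/-- A loop: a quasigroup with a two-sided identity. -/
class Loop (α : Type*) extends Mul α, One α where
  ldiv : α → α → α
  rdiv : α → α → α
  one_mul : ∀ a : α, 1 * a = a
  mul_one : ∀ a : α, a * 1 = a
  mul_ldiv : ∀ a b : α, a * ldiv a b = b
  ldiv_mul : ∀ a b : α, ldiv a (a * b) = b
  rdiv_mul : ∀ a b : α, rdiv a b * b = a
  mul_rdiv : ∀ a b : α, rdiv (a * b) b = a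

namespace Loop

variable {α : Type*} [Loop α]

/-- The commutator `[a,b] = (ba)\(ab)`. -/
def comm (a b : α) : α := ldiv (b * a) (a * b)

/-- The associator `(a,b,c) = (a(bc))\((ab)c)`. -/
def assoc (a b c : α) : α := ldiv (a * (b * c)) ((a * b) * c)

/-- The associator deviation indexed by a list of indices `αs = [α_n, ..., α_1]`
(stored with the *last* index first) applied to a list of arguments.
Level `0` (empty index list) is the associator. -/
def dev : List ℕ → List α → α
  | [], [a, b, c] => assoc a b c
  | (k :: rest), args =>
      let A : α → α := fun x => dev rest (args.take (k - 1) ++ x :: args.drop (k + 1))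
      ldiv (A (args.getD (k - 1) 1) * A (args.getD k 1))
        (A (args.getD (k - 1) 1 * args.getD k 1))
  | _, _ => 1

/-- A subset is a subloop if it contains `1` and is closed under
multiplication and both divisions. -/
def IsSubloop (S : Set α) : Prop :=
  (1 : α) ∈ S ∧ ∀ a ∈ S, ∀ b ∈ S, a * b ∈ S ∧ ldiv a b ∈ S ∧ rdiv a b ∈ S

/-- A subloop is normal if `xN = Nx`, `(Nx)y = N(xy)` and `y(xN) = (yx)N`. -/
def IsNormal (S : Set α) : Prop :=
  IsSubloop S ∧
  (∀ x : α, {z | ∃ n ∈ S, z = x * n} = {z | ∃ n ∈ S, z = n * x}) ∧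
  (∀ x y : α, {z | ∃ n ∈ S, z = (n * x) * y} = {z | ∃ n ∈ S, z = n * (x * y)}) ∧
  (∀ x y : α, {z | ∃ n ∈ S, z = y * (x * n)} = {z | ∃ n ∈ S, z = (y * x) * n})

/-- `N/M` is central in `L/M`: all commutators and associators involving an
element of `N` lie in `M`. -/
def CentralMod (N M : Set α) : Prop :=
  ∀ n ∈ N, ∀ x y : α,
    comm n x ∈ M ∧ comm x n ∈ M ∧
    assoc n x y ∈ M ∧ assoc x n y ∈ M ∧ assoc x y n ∈ M

/-- `[N,L]`: the smallest normal subloop `M` such that `N/M` is central in `L/M`. -/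
def bracket (N : Set α) : Set α := ⋂₀ {M | IsNormal M ∧ CentralMod N M}

end Loop

/-- The lower central series of a loop: `γ 1 = L`, `γ (i+1) = [γ i, L]`. -/
def Loop.gamma (α : Type*) [Loop α] : ℕ → Set α
  | 0 => Set.univ
  | 1 => Set.univ
  | (n + 2) => Loop.bracket (Loop.gamma α (n + 1))

namespace Loop

variable {α : Type*} [Loop α]

/-- A family `M i` of normal subloops is admissible for the
commutator-associator filtration. -/
def Admissible (M : ℕ → Set α) : Prop :=
  (∀ i, IsNormal (M i)) ∧ M 1 = Set.univ ∧
  (∀ i p q, 1 ≤ p → 1 ≤ q → i ≤ p + q →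
    ∀ a ∈ M p, ∀ b ∈ M q, comm a b ∈ M i) ∧
  (∀ i p q r, 1 ≤ p → 1 ≤ q → 1 ≤ r → i ≤ p + q + r →
    ∀ a ∈ M p, ∀ b ∈ M q, ∀ c ∈ M r, assoc a b c ∈ M i) ∧
  (∀ (i : ℕ) (idx ps : List ℕ) (xs : List α), idx ≠ [] →
    ps.length = idx.length + 3 → xs.length = idx.length + 3 →
    (∀ j < idx.length, 1 ≤ idx.getD j 0 ∧ idx.getD j 0 ≤ (idx.length - j) + 2) →
    (∀ j < ps.length, 1 ≤ ps.getD j 0 ∧ xs.getD j 1 ∈ M (ps.getD j 0)) →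
    i ≤ ps.sum → dev idx xs ∈ M i)

/-- The commutator-associator filtration: the smallest admissible family. -/
def casub (α : Type*) [Loop α] (i : ℕ) : Set α :=
  ⋂₀ {S | ∃ M : ℕ → Set α, Admissible M ∧ S = M i}

/-- Congruence modulo a (normal) subloop: `x ≡ y mod N` iff `x ∈ yN`. -/
def ModEq (N : Set α) (x y : α) : Prop := ∃ n ∈ N, x = y * n

/-- Loop homomorphisms: maps preserving multiplication. -/
def IsLoopHom {β : Type*} [Loop β] (φ : α → β) : Prop :=
  ∀ a b : α, φ (a * b) = φ a * φ b

/-- The subloop generated by a subset. -/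
def closure (S : Set α) : Set α := ⋂₀ {T | IsSubloop T ∧ S ⊆ T}

/-- Left-normed powers: `ypow y m = ((...(yy)y)...)y`. -/
def ypow (y : α) : ℕ → α
  | 0 => 1
  | (m + 1) => ypow y m * y

end Loop

section Higman

variable {L B : Type*} [Loop L] [AddCommGroup B]

/-- Multiplication in Higman's loop `(L, B)`. -/
def hmul (f : L → L → B) (x y : L × B) : L × B :=
  (x.1 * y.1, x.2 + y.2 + f x.1 y.1)

/-- Left division in Higman's loop: `(l2,b2)\(l1,b1) = (l2\l1, b1-b2-f(l2, l2\l1))`. -/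
def hldiv (f : L → L → B) (x y : L × B) : L × B :=
  (Loop.ldiv x.1 y.1, y.2 - x.2 - f x.1 (Loop.ldiv x.1 y.1))

/-- Right division in Higman's loop: `(l1,b1)/(l2,b2) = (l1/l2, b1-b2-f(l1/l2, l2))`. -/
def hrdiv (f : L → L → B) (x y : L × B) : L × B :=
  (Loop.rdiv x.1 y.1, x.2 - y.2 - f (Loop.rdiv x.1 y.1) y.1)

/-- The commutator in Higman's loop. -/
def hcomm (f : L → L → B) (x y : L × B) : L × B :=
  hldiv f (hmul f y x) (hmul f x y)

/-- The associator in Higman's loop. -/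
def hassoc (f : L → L → B) (x y z : L × B) : L × B :=
  hldiv f (hmul f x (hmul f y z)) (hmul f (hmul f x y) z)

end Higman

namespace LoopAux

open Loop

variable {L : Type*} [Loop L]

/-- Pointwise characterization of normality. -/
lemma isNormal_iff (S : Set L) : IsNormal S ↔ IsSubloop S ∧
    (∀ x : L, ∀ n ∈ S, rdiv (x * n) x ∈ S) ∧
    (∀ x : L, ∀ n ∈ S, ldiv x (n * x) ∈ S) ∧
    (∀ x y : L, ∀ n ∈ S, rdiv ((n * x) * y) (x * y) ∈ S) ∧
    (∀ x y : L, ∀ n ∈ S, rdiv (rdiv (n * (x * y)) y) x ∈ S) ∧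
    (∀ x y : L, ∀ n ∈ S, ldiv (y * x) (y * (x * n)) ∈ S) ∧
    (∀ x y : L, ∀ n ∈ S, ldiv x (ldiv y ((y * x) * n)) ∈ S) := by
  constructor
  · rintro ⟨hsub, h1, h2, h3⟩
    refine ⟨hsub, ?_, ?_, ?_, ?_, ?_, ?_⟩
    · intro x n hn
      have : x * n ∈ {z | ∃ m ∈ S, z = m * x} := by
        rw [← h1]; exact ⟨n, hn, rfl⟩
      obtain ⟨m, hm, hz⟩ := this
      rw [hz, mul_rdiv]; exact hm
    · intro x n hn
      have : n * x ∈ {z | ∃ m ∈ S, z = x * m} := by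
        rw [h1]; exact ⟨n, hn, rfl⟩
      obtain ⟨m, hm, hz⟩ := this
      rw [hz, ldiv_mul]; exact hm
    · intro x y n hn
      have : (n * x) * y ∈ {z | ∃ m ∈ S, z = m * (x * y)} := by
        rw [← h2]; exact ⟨n, hn, rfl⟩
      obtain ⟨m, hm, hz⟩ := this
      rw [hz, mul_rdiv]; exact hm
    · intro x y n hn
      have : n * (x * y) ∈ {z | ∃ m ∈ S, z = (m * x) * y} := by
        rw [h2]; exact ⟨n, hn, rfl⟩
      obtain ⟨m, hm, hz⟩ := this
      rw [hz, mul_rdiv, mul_rdiv]; exact hm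
    · intro x y n hn
      have : y * (x * n) ∈ {z | ∃ m ∈ S, z = (y * x) * m} := by
        rw [← h3]; exact ⟨n, hn, rfl⟩
      obtain ⟨m, hm, hz⟩ := this
      rw [hz, ldiv_mul]; exact hm
    · intro x y n hn
      have : (y * x) * n ∈ {z | ∃ m ∈ S, z = y * (x * m)} := by
        rw [h3]; exact ⟨n, hn, rfl⟩
      obtain ⟨m, hm, hz⟩ := this
      rw [hz, ldiv_mul, ldiv_mul]; exact hm
  · rintro ⟨hsub, p1, p2, p3, p4, p5, p6⟩
    refine ⟨hsub, ?_, ?_, ?_⟩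
    · intro x
      ext z
      constructor
      · rintro ⟨n, hn, rfl⟩
        exact ⟨rdiv (x * n) x, p1 x n hn, (rdiv_mul _ _).symm⟩
      · rintro ⟨n, hn, rfl⟩
        exact ⟨ldiv x (n * x), p2 x n hn, (mul_ldiv _ _).symm⟩
    · intro x y
      ext z
      constructor
      · rintro ⟨n, hn, rfl⟩
        exact ⟨rdiv ((n * x) * y) (x * y), p3 x y n hn, (rdiv_mul _ _).symm⟩
      · rintro ⟨n, hn, rfl⟩
        refine ⟨rdiv (rdiv (n * (x * y)) y) x, p4 x y n hn, ?_⟩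
        rw [rdiv_mul, rdiv_mul]
    · intro x y
      ext z
      constructor
      · rintro ⟨n, hn, rfl⟩
        exact ⟨ldiv (y * x) (y * (x * n)), p5 x y n hn, (mul_ldiv _ _).symm⟩
      · rintro ⟨n, hn, rfl⟩
        refine ⟨ldiv x (ldiv y ((y * x) * n)), p6 x y n hn, ?_⟩
        rw [mul_ldiv, mul_ldiv]

lemma isNormal_univ : IsNormal (Set.univ : Set L) := by
  rw [isNormal_iff]
  refine ⟨⟨trivial, fun _ _ _ _ => ⟨trivial, trivial, trivial⟩⟩, ?_, ?_, ?_, ?_, ?_, ?_⟩ <;>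
    intros <;> trivial

lemma isNormal_sInter {𝒮 : Set (Set L)} (h : ∀ S ∈ 𝒮, IsNormal S) :
    IsNormal (⋂₀ 𝒮) := by
  rw [isNormal_iff]
  refine ⟨⟨?_, ?_⟩, ?_, ?_, ?_, ?_, ?_, ?_⟩
  · intro S hS; exact (h S hS).1.1
  · intro a ha b hb
    refine ⟨fun S hS => ((h S hS).1.2 a (ha S hS) b (hb S hS)).1,
      fun S hS => ((h S hS).1.2 a (ha S hS) b (hb S hS)).2.1,
      fun S hS => ((h S hS).1.2 a (ha S hS) b (hb S hS)).2.2⟩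
  · intro x n hn S hS
    exact (((isNormal_iff S).mp (h S hS)).2.1) x n (hn S hS)
  · intro x n hn S hS
    exact (((isNormal_iff S).mp (h S hS)).2.2.1) x n (hn S hS)
  · intro x y n hn S hS
    exact (((isNormal_iff S).mp (h S hS)).2.2.2.1) x y n (hn S hS)
  · intro x y n hn S hS
    exact (((isNormal_iff S).mp (h S hS)).2.2.2.2.1) x y n (hn S hS)
  · intro x y n hn S hS
    exact (((isNormal_iff S).mp (h S hS)).2.2.2.2.2.1) x y n (hn S hS)
  · intro x y n hn S hS
    exact (((isNormal_iff S).mp (h S hS)).2.2.2.2.2.2) x y n (hn S hS)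

/-- Every deviation lies in any subloop containing all associators. -/
lemma dev_mem {M : Set L} (hM : IsSubloop M)
    (ha : ∀ a b c : L, assoc a b c ∈ M) :
    ∀ (idx : List ℕ) (xs : List L), dev idx xs ∈ M := by
  intro idx
  induction idx with
  | nil =>
    intro xs
    match xs with
    | [] => exact hM.1
    | [a] => exact hM.1
    | [a, b] => exact hM.1
    | [a, b, c] => exact ha a b c
    | a :: b :: c :: d :: t => exact hM.1
  | cons k rest ih =>
    intro xs
    show dev (k :: rest) xs ∈ M
    rw [dev]
    have h1 := ih (xs.take (k - 1) ++ xs.getD (k - 1) 1 :: xs.drop (k + 1))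
    have h2 := ih (xs.take (k - 1) ++ xs.getD k 1 :: xs.drop (k + 1))
    have h3 := ih (xs.take (k - 1) ++ (xs.getD (k - 1) 1 * xs.getD k 1) :: xs.drop (k + 1))
    exact (hM.2 _ ((hM.2 _ h1 _ h2).1) _ h3).2.1

end LoopAux

/-- for any loop `L`, `γ₂ L = L₂`, and both coincide with the
smallest normal subloop `N` such that `L/N` is an abelian group (i.e. such
that all commutators and associators lie in `N`). -/
theorem gamma2_eq_casub2 {L : Type*} [Loop L] :
    Loop.gamma L 2 = Loop.casub L 2 ∧
    Loop.IsNormal (Loop.gamma L 2) ∧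
    (∀ a b : L, Loop.comm a b ∈ Loop.gamma L 2) ∧
    (∀ a b c : L, Loop.assoc a b c ∈ Loop.gamma L 2) ∧
    (∀ N : Set L, Loop.IsNormal N → (∀ a b : L, Loop.comm a b ∈ N) →
      (∀ a b c : L, Loop.assoc a b c ∈ N) → Loop.gamma L 2 ⊆ N) := by
  have hG : Loop.gamma L 2 =
      ⋂₀ {M : Set L | Loop.IsNormal M ∧ Loop.CentralMod Set.univ M} := by
    show Loop.bracket (Loop.gamma L 1) = _
    rw [show Loop.gamma L 1 = Set.univ from rfl]
    rfl
  -- normality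
  have hnorm : Loop.IsNormal (Loop.gamma L 2) := by
    rw [hG]
    exact LoopAux.isNormal_sInter (fun S hS => hS.1)
  -- commutators
  have hcomm : ∀ a b : L, Loop.comm a b ∈ Loop.gamma L 2 := by
    intro a b
    rw [hG]
    intro S hS
    exact (hS.2 a trivial b b).1
  -- associators
  have hassoc : ∀ a b c : L, Loop.assoc a b c ∈ Loop.gamma L 2 := by
    intro a b c
    rw [hG]
    intro S hS
    exact (hS.2 a trivial b c).2.2.1
  -- minimality
  have hmin : ∀ N : Set L, Loop.IsNormal N → (∀ a b : L, Loop.comm a b ∈ N) →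
      (∀ a b c : L, Loop.assoc a b c ∈ N) → Loop.gamma L 2 ⊆ N := by
    intro N hN hc ha
    rw [hG]
    apply Set.sInter_subset_of_mem
    refine ⟨hN, fun n _ x y => ⟨hc n x, hc x n, ha n x y, ha x n y, ha x y n⟩⟩
  refine ⟨?_, hnorm, hcomm, hassoc, hmin⟩
  apply le_antisymm
  · -- gamma ⊆ casub
    intro z hz S hS
    obtain ⟨M, hAdm, rfl⟩ := hS
    obtain ⟨hMn, hM1, hMc, hMa, _⟩ := hAdm
    refine hmin (M 2) (hMn 2) ?_ ?_ hz
    · intro a b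
      exact hMc 2 1 1 le_rfl le_rfl le_rfl a (hM1 ▸ trivial) b (hM1 ▸ trivial)
    · intro a b c
      exact hMa 2 1 1 1 le_rfl le_rfl le_rfl (by norm_num) a (hM1 ▸ trivial)
        b (hM1 ▸ trivial) c (hM1 ▸ trivial)
  · -- casub ⊆ gamma
    intro z hz
    set M : ℕ → Set L := fun i => if i ≤ 1 then Set.univ else Loop.gamma L 2 with hMdef
    have hMi : ∀ i, 2 ≤ i → M i = Loop.gamma L 2 := by
      intro i hi
      simp only [hMdef, if_neg (by omega : ¬ i ≤ 1)]
    have hMem : ∀ i, ∀ w : L, w ∈ Loop.gamma L 2 → w ∈ M i := by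
      intro i w hw
      by_cases h : i ≤ 1
      · simp only [hMdef, if_pos h]; trivial
      · rw [hMi i (by omega)]; exact hw
    have hAdm : Loop.Admissible M := by
      refine ⟨?_, ?_, ?_, ?_, ?_⟩
      · intro i
        by_cases h : i ≤ 1
        · simp only [hMdef, if_pos h]; exact LoopAux.isNormal_univ
        · rw [hMi i (by omega)]; exact hnorm
      · simp [hMdef]
      · intro i p q _ _ _ a _ b _
        exact hMem i _ (hcomm a b)
      · intro i p q r _ _ _ _ a _ b _ c _
        exact hMem i _ (hassoc a b c)
      · intro i idx ps xs _ _ _ _ _ _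
        exact hMem i _ (LoopAux.dev_mem hnorm.1 hassoc idx xs)
    have := hz (M 2) ⟨M, hAdm, rfl⟩
    rwa [hMi 2 le_rfl] at this
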